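/- The map f that sends each non-final state A ∈ Q_AC of the Aho–Corasick automaton of π to the state of S_π reached by reading the word A from the initial state of S_π, and sends the Aho–Corasick final state to the final state of S_π, is a surjection from the states of the Aho–Corasick automaton onto the set of states of S_π reachable from its initial state. -/

import Mathlib

variable {A : Type*}

/-- One transition of the subset seed automaton `S_π`: the state `none` is the final sink
state, a state `some (X, t)` is the non-final state `⟨X,t⟩`. -/
def seedStep [DecidableEq A] (one : A) (π : ℕ → Finset A) (s : ℕ) :
    Option (Finset ℕ × ℕ) → A → Option (Finset ℕ × ℕ)
  | none, _ => none
  | some (X, t), a =>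
    if a = one then
      if X.sup id + (t + 1) = s then none else some (X, t + 1)
    else
      let Y : Finset ℕ := ((Finset.Icc 1 (t + 1)).filter fun x => a ∈ π x) ∪
        ((X.filter fun x => x + t + 1 ≤ s ∧ a ∈ π (x + t + 1)).image fun x => x + t + 1)
      if Y.sup id = s then none else some (Y, 0)

/-- Reading a word from a state, applying transitions letter by letter. -/
def seedRead [DecidableEq A] (one : A) (π : ℕ → Finset A) (s : ℕ)
    (q : Option (Finset ℕ × ℕ)) (w : List A) : Option (Finset ℕ × ℕ) :=
  w.foldl (seedStep one π s) q

/-- `π` matches the alignment `w` at the (1-based) position `p`. -/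
def seedMatches (one : A) (π : ℕ → Finset A) (s : ℕ) (w : List A) (p : ℕ) : Prop :=
  1 ≤ p ∧ p + s ≤ w.length + 1 ∧
    ∀ i, 1 ≤ i → i ≤ s → w.getD (p + i - 2) one ∈ π i


section Aux
set_option linter.unusedSectionVars false
variable [DecidableEq A] (one : A) (π : ℕ → Finset A) (s : ℕ)

lemma seedRead_append (q : Option (Finset ℕ × ℕ)) (W : List A) (a : A) :
    seedRead one π s q (W ++ [a]) = seedStep one π s (seedRead one π s q W) a := by
  simp [seedRead, List.foldl_append]

lemma seedStep_one (X : Finset ℕ) (t : ℕ) :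
    seedStep one π s (some (X, t)) one =
      if X.sup id + (t + 1) = s then none else some (X, t + 1) := by
  simp [seedStep]

lemma seedStep_ne {a : A} (ha : a ≠ one) (X : Finset ℕ) (t : ℕ) :
    seedStep one π s (some (X, t)) a =
      if (((Finset.Icc 1 (t + 1)).filter fun x => a ∈ π x) ∪
          ((X.filter fun x => x + t + 1 ≤ s ∧ a ∈ π (x + t + 1)).image
            fun x => x + t + 1)).sup id = s
      then none
      else some ((((Finset.Icc 1 (t + 1)).filter fun x => a ∈ π x) ∪
          ((X.filter fun x => x + t + 1 ≤ s ∧ a ∈ π (x + t + 1)).image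
            fun x => x + t + 1)), 0) := by
  simp [seedStep, ha]

lemma drop_concat (W : List A) (a : A) {l : ℕ} (h1 : 1 ≤ l) (h2 : l ≤ W.length + 1) :
    (W ++ [a]).drop ((W ++ [a]).length - l) = W.drop (W.length - (l - 1)) ++ [a] := by
  rw [List.length_append, List.length_singleton,
    show W.length + 1 - l = W.length - (l - 1) by omega]
  exact List.drop_append_of_le_length (by omega)

lemma drop_rep (V : List A) (t l : ℕ) (hl : l ≤ t) :
    (V ++ List.replicate t one).drop ((V ++ List.replicate t one).length - l)
      = List.replicate l one := by
  rw [List.length_append, List.length_replicate,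
    show V.length + t - l = V.length + (t - l) by omega,
    List.drop_append, List.drop_replicate,
    List.drop_eq_nil_of_le (by omega : V.length ≤ V.length + (t - l)), List.nil_append,
    show t - (V.length + (t - l) - V.length) = l by omega]

lemma mat_concat {B : List A} {a : A}
    (hB : ∀ i (h : i < B.length), B.get ⟨i, h⟩ ∈ π (i + 1))
    (ha : a ∈ π (B.length + 1)) :
    ∀ i (h : i < (B ++ [a]).length), (B ++ [a]).get ⟨i, h⟩ ∈ π (i + 1) := by
  intro i h
  rw [List.get_eq_getElem]
  rcases Nat.lt_or_ge i B.length with h' | h'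
  · rw [List.getElem_append_left h']
    have := hB i h'
    rwa [List.get_eq_getElem] at this
  · have hi : i = B.length := by
      simp only [List.length_append, List.length_singleton] at h; omega
    rw [List.getElem_concat_length hi]
    rw [hi]; exact ha

lemma seed_inv (hs : 1 ≤ s) (hone : ∀ i, 1 ≤ i → i ≤ s → one ∈ π i) :
    ∀ W : List A, ∀ X : Finset ℕ, ∀ t : ℕ,
      seedRead one π s (some (∅, 0)) W = some (X, t) →
      (∃ V, W = V ++ List.replicate t one) ∧
      (∀ x ∈ X, 1 ≤ x ∧ x + t ≤ W.length ∧
        ∀ i (h : i < (W.drop (W.length - (x + t))).length),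
          (W.drop (W.length - (x + t))).get ⟨i, h⟩ ∈ π (i + 1)) ∧
      X.sup id + t + 1 ≤ s ∧
      X.sup id + t ≤ W.length ∧
      (∀ l ≤ X.sup id + t,
        seedRead one π s (some (∅, 0)) (W.drop (W.length - l)) =
          some (X.filter fun x => x + t ≤ l, min l t)) := by
  intro W
  induction W using List.reverseRecOn with
  | nil =>
    intro X t h
    simp only [seedRead, List.foldl_nil, Option.some.injEq, Prod.mk.injEq] at h
    obtain ⟨rfl, rfl⟩ := h
    refine ⟨⟨[], by simp⟩, by simp, by simpa using hs, by simp, ?_⟩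
    intro l hl
    have hl0 : l = 0 := by simpa using hl
    subst hl0
    simp [seedRead]
  | append_singleton W' a ih =>
    intro X t h
    rw [seedRead_append] at h
    rcases hW' : seedRead one π s (some (∅, 0)) W' with _ | ⟨X', t'⟩
    · rw [hW'] at h; simp [seedStep] at h
    · rw [hW'] at h
      obtain ⟨⟨V, hV⟩, h2, h3, hlen, h4⟩ := ih X' t' hW'
      have hx1 : ∀ x ∈ X', 1 ≤ x := fun x hx => (h2 x hx).1
      have hsupX' : ∀ x ∈ X', x ≤ X'.sup id := fun x hx => Finset.le_sup (f := id) hx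
      by_cases ha : a = one
      · -- letter is `one`
        subst ha
        rw [seedStep_one] at h
        by_cases hfin : X'.sup id + (t' + 1) = s
        · rw [if_pos hfin] at h; exact absurd h (by simp)
        rw [if_neg hfin] at h
        obtain ⟨rfl, rfl⟩ : X' = X ∧ t' + 1 = t := by simpa using h
        have h3n : X'.sup id + (t' + 1) + 1 ≤ s := by omega
        refine ⟨⟨V, by rw [hV, List.replicate_succ', List.append_assoc]⟩, ?_, h3n,
          by simp; omega, ?_⟩
        · -- matching suffixes
          intro x hx
          obtain ⟨hx1', hxlen, hmat⟩ := h2 x hx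
          have hxs := hsupX' x hx
          refine ⟨hx1', by simp; omega, ?_⟩
          have hd := drop_concat W' a (l := x + (t' + 1)) (by omega) (by omega)
          rw [show x + (t' + 1) - 1 = x + t' by omega] at hd
          rw [hd]
          have hBlen : (W'.drop (W'.length - (x + t'))).length = x + t' := by
            rw [List.length_drop]; omega
          exact mat_concat π hmat (by rw [hBlen]; exact hone _ (by omega) (by omega))
        · -- suffix reading
          intro l hl
          rcases Nat.eq_zero_or_pos l with rfl | hl1
          · simp only [Nat.sub_zero, List.drop_length]
            have hf : (X'.filter fun x => x + (t' + 1) ≤ 0) = ∅ :=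
              Finset.filter_false_of_mem fun x hx => by have := hx1 x hx; omega
            rw [hf]
            simp [seedRead]
          · rw [drop_concat W' a hl1 (by omega), seedRead_append, h4 (l - 1) (by omega),
              seedStep_one]
            rw [if_neg ?_]
            · rw [Finset.filter_congr (fun x hx => by omega :
                  ∀ x ∈ X', x + t' ≤ l - 1 ↔ x + (t' + 1) ≤ l),
                show min (l - 1) t' + 1 = min l (t' + 1) by omega]
            · have hsub : (X'.filter fun x => x + t' ≤ l - 1).sup id ≤ X'.sup id :=
                Finset.sup_mono (Finset.filter_subset _ _)
              omega
      · -- letter is not `one`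
        rw [seedStep_ne one π s ha] at h
        set Y : Finset ℕ := ((Finset.Icc 1 (t' + 1)).filter fun x => a ∈ π x) ∪
          ((X'.filter fun x => x + t' + 1 ≤ s ∧ a ∈ π (x + t' + 1)).image
            fun x => x + t' + 1) with hY
        by_cases hfin : Y.sup id = s
        · rw [if_pos hfin] at h; exact absurd h (by simp)
        rw [if_neg hfin] at h
        obtain ⟨rfl, rfl⟩ : Y = X ∧ 0 = t := by simpa using h
        have hYel : ∀ y ∈ Y, 1 ≤ y ∧ y ≤ X'.sup id + t' + 1 ∧ y ≤ s := by
          intro y hy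
          rw [hY] at hy
          simp only [Finset.mem_union, Finset.mem_filter, Finset.mem_Icc,
            Finset.mem_image] at hy
          rcases hy with ⟨⟨hy1, hy2⟩, _⟩ | ⟨x, ⟨hxX, hxs, _⟩, rfl⟩
          · exact ⟨hy1, by omega, by omega⟩
          · have := hsupX' x hxX
            have := hx1 x hxX
            exact ⟨by omega, by omega, hxs⟩
        have hsupY : Y.sup id ≤ X'.sup id + t' + 1 :=
          Finset.sup_le fun y hy => (hYel y hy).2.1
        have hsupYs : Y.sup id ≤ s := Finset.sup_le fun y hy => (hYel y hy).2.2
        have h3n : Y.sup id + 0 + 1 ≤ s := by omega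
        refine ⟨⟨W' ++ [a], by simp⟩, ?_, h3n,
          by rw [List.length_append, List.length_singleton]; omega, ?_⟩
        · -- matching suffixes
          intro y hy
          obtain ⟨hy1, hyb, hys⟩ := hYel y hy
          refine ⟨hy1, by rw [List.length_append, List.length_singleton]; omega, ?_⟩
          rw [show y + 0 = y from rfl, drop_concat W' a hy1 (by omega)]
          rw [hY] at hy
          simp only [Finset.mem_union, Finset.mem_filter, Finset.mem_Icc,
            Finset.mem_image] at hy
          rcases hy with ⟨⟨_, hy2⟩, hyπ⟩ | ⟨x, ⟨hxX, hxs, hxπ⟩, rfl⟩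
          · have hr : W'.drop (W'.length - (y - 1)) = List.replicate (y - 1) one := by
              rw [hV]; exact drop_rep one V t' (y - 1) (by omega)
            rw [hr]
            refine mat_concat π ?_ ?_
            · intro i hi
              simp only [List.length_replicate] at hi
              simp only [List.get_eq_getElem, List.getElem_replicate]
              exact hone _ (by omega) (by omega)
            · rw [List.length_replicate, show y - 1 + 1 = y by omega]
              exact hyπ
          · obtain ⟨_, hxlen, hmatx⟩ := h2 x hxX
            rw [show x + t' + 1 - 1 = x + t' by omega]
            have hBlen : (W'.drop (W'.length - (x + t'))).length = x + t' := by
              rw [List.length_drop]; omega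
            exact mat_concat π hmatx (by rw [hBlen]; exact hxπ)
        · -- suffix reading
          intro l hl
          rcases Nat.eq_zero_or_pos l with rfl | hl1
          · simp only [Nat.sub_zero, List.drop_length]
            have hf : (Y.filter fun x => x + 0 ≤ 0) = ∅ :=
              Finset.filter_false_of_mem fun y hy => by have := (hYel y hy).1; omega
            rw [hf]
            simp [seedRead]
          · have hlW : l ≤ W'.length + 1 := by omega
            rw [drop_concat W' a hl1 hlW, seedRead_append, h4 (l - 1) (by omega),
              seedStep_ne one π s ha]
            have hYl : ((Finset.Icc 1 (min (l - 1) t' + 1)).filter fun x => a ∈ π x) ∪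
                (((X'.filter fun x => x + t' ≤ l - 1).filter
                  fun x => x + min (l - 1) t' + 1 ≤ s ∧ a ∈ π (x + min (l - 1) t' + 1)).image
                    fun x => x + min (l - 1) t' + 1)
                = Y.filter fun x => x + 0 ≤ l := by
              ext y
              simp only [hY, Finset.mem_union, Finset.mem_filter, Finset.mem_image,
                Finset.mem_Icc, Nat.add_zero]
              constructor
              · rintro (⟨⟨hy1, hy2⟩, hyπ⟩ | ⟨x, ⟨⟨hxX, hxl⟩, hxs, hxπ⟩, rfl⟩)
                · exact ⟨Or.inl ⟨⟨hy1, by omega⟩, hyπ⟩, by omega⟩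
                · have hx1' := hx1 x hxX
                  have hmt : min (l - 1) t' = t' := by omega
                  rw [hmt] at hxs hxπ ⊢
                  exact ⟨Or.inr ⟨x, ⟨hxX, hxs, hxπ⟩, rfl⟩, by omega⟩
              · rintro ⟨⟨⟨hy1, hy2⟩, hyπ⟩ | ⟨x, ⟨hxX, hxs, hxπ⟩, rfl⟩, hyl⟩
                · exact Or.inl ⟨⟨hy1, by omega⟩, hyπ⟩
                · have hx1' := hx1 x hxX
                  have hmt : min (l - 1) t' = t' := by omega
                  refine Or.inr ⟨x, ⟨⟨hxX, by omega⟩, ?_, ?_⟩, by omega⟩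
                  · rw [hmt]; exact hxs
                  · rw [hmt]; exact hxπ
            rw [hYl]
            have hsupl : (Y.filter fun x => x + 0 ≤ l).sup id ≤ l :=
              Finset.sup_le fun y hy => by
                simp only [Finset.mem_filter, Nat.add_zero] at hy
                simpa using hy.2
            rw [if_neg (by omega), Nat.min_zero]

end Aux

/-- The map sending each non-final Aho–Corasick state `B` (a word of length `< s` matched
by the corresponding prefix of `π`) to the state of `S_π` reached by reading `B` from the
initial state, and sending the Aho–Corasick final state (`none`) to the final state of
`S_π`, is a surjection onto the set of states of `S_π` reachable from its initial state. -/
theorem stmt_10 [DecidableEq A] (one : A) (π : ℕ → Finset A) (s : ℕ)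
    (hs : 1 ≤ s) (hone : ∀ i, 1 ≤ i → i ≤ s → one ∈ π i) :
    Set.SurjOn
      (fun oB : Option (List A) =>
        match oB with
        | none => (none : Option (Finset ℕ × ℕ))
        | some B => seedRead one π s (some (∅, 0)) B)
      ({none} ∪ Option.some '' {B : List A | B.length < s ∧
          ∀ i (h : i < B.length), B.get ⟨i, h⟩ ∈ π (i + 1)})
      {q | ∃ W : List A, seedRead one π s (some (∅, 0)) W = q} := by
  rintro q ⟨W, hW⟩
  rcases q with _ | ⟨X, t⟩
  · exact ⟨none, Set.mem_union_left _ rfl, rfl⟩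
  · obtain ⟨⟨V, hV⟩, h2, h3, hlen, h4⟩ := seed_inv one π s hs hone W X t hW
    refine ⟨some (W.drop (W.length - (X.sup id + t))),
      Set.mem_union_right _ ⟨_, ⟨?_, ?_⟩, rfl⟩, ?_⟩
    · rw [List.length_drop]; omega
    · rcases X.eq_empty_or_nonempty with rfl | hne
      · have ht : t + 1 ≤ s := by simpa using h3
        rw [show (∅ : Finset ℕ).sup id + t = t by simp, hV, drop_rep one V t t le_rfl]
        intro i hi
        simp only [List.length_replicate] at hi
        simp only [List.get_eq_getElem, List.getElem_replicate]
        exact hone _ (by omega) (by omega)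
      · obtain ⟨x, hx, hsup⟩ := Finset.exists_mem_eq_sup X hne id
        simp only [id] at hsup
        rw [hsup]
        exact (h2 x hx).2.2
    · have hread := h4 (X.sup id + t) le_rfl
      rw [Finset.filter_true_of_mem (fun x hx => by
            have := Finset.le_sup (f := id) hx
            simp only [id] at this
            omega),
        min_eq_right (by omega)] at hread
      exact hread
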